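/- Let V be a d-dimensional Euclidean space, and let A ∈ End(∧V*) be a linear combination of operators of the forms a*_i a_j and a*_i a_j a*_k a_l. If k ≤ d/2 - 1, then the supertrace of A^k vanishes: Str(A^k) = 0. -/

import Mathlib

open Finset

variable {d : ℕ}

/-- The exterior algebra `∧V*` of the dual of a `d`-dimensional Euclidean space `V`,
realized concretely through its orthonormal basis `(θ_{i₁} ∧ ⋯ ∧ θ_{i_k})_{i₁<⋯<i_k}`
indexed by subsets of `{1,…,d}`, with the induced inner product. -/
abbrev FermionFock (d : ℕ) := EuclideanSpace ℝ (Finset (Fin d))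

/-- The creation operator `a*_i : ω ↦ θᵢ ∧ ω` on `∧V*`. -/
noncomputable def create (i : Fin d) : Module.End ℝ (FermionFock d) where
  toFun v := WithLp.toLp 2 fun (S : Finset (Fin d)) =>
    if i ∈ S then (-1 : ℝ) ^ ((S.filter fun j => j < i).card) * v (S.erase i) else 0
  map_add' u v := by
    ext S
    by_cases h : i ∈ S <;> simp [h, mul_add]
  map_smul' c v := by
    ext S
    by_cases h : i ∈ S <;> simp [h] <;> ring

/-- The annihilation operator `aᵢ`, the adjoint of `a*_i` with respect to the induced
inner product on `∧V*`. -/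
noncomputable def annih (i : Fin d) : Module.End ℝ (FermionFock d) :=
  LinearMap.adjoint (create i)


lemma create_apply (j : Fin d) (v : FermionFock d) (T : Finset (Fin d)) :
    create j v T = if j ∈ T then (-1 : ℝ) ^ ((T.filter fun x => x < j).card) * v (T.erase j) else 0 := rfl

lemma create_single (j : Fin d) (T : Finset (Fin d)) :
    create j (EuclideanSpace.single T (1:ℝ)) =
      if j ∈ T then 0 else ((-1 : ℝ) ^ ((T.filter fun x => x < j).card)) • EuclideanSpace.single (insert j T) (1:ℝ) := by
  ext S
  rw [create_apply]
  by_cases hjT : j ∈ T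
  · simp only [hjT, if_true]
    by_cases hjS : j ∈ S
    · simp only [hjS, if_true, EuclideanSpace.single_apply]
      have : S.erase j ≠ T := fun h => (Finset.notMem_erase j S) (h ▸ hjT)
      simp [this]
    · simp [hjS]
  · simp only [hjT, if_false]
    by_cases hjS : j ∈ S
    · simp only [hjS, if_true, PiLp.smul_apply, EuclideanSpace.single_apply, smul_eq_mul]
      by_cases he : S = insert j T
      · have h2 : S.erase j = T := by
          rw [he, Finset.erase_insert hjT]
        have h3 : (S.filter fun x => x < j).card = (T.filter fun x => x < j).card := by
          rw [he, Finset.filter_insert]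
          simp [lt_irrefl, h2, he ▸ h2]
        have h4 : (Finset.filter (fun x => x < j) (insert j T)).card = (T.filter fun x => x < j).card := by
          rw [Finset.filter_insert]; simp [lt_irrefl]
        simp [he, h2, h3, h4, hjT]
      · have h2 : S.erase j ≠ T := by
          intro h
          apply he
          rw [← h, Finset.insert_erase hjS]
        simp [he, h2]
    · have : S ≠ insert j T := fun h => hjS (h ▸ Finset.mem_insert_self j T)
      simp [hjS, this, EuclideanSpace.single_apply]

lemma annih_apply (j : Fin d) (v : FermionFock d) (T : Finset (Fin d)) :
    annih j v T = if j ∈ T then 0 else (-1 : ℝ) ^ ((T.filter fun x => x < j).card) * v (insert j T) := by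
  have h1 : annih j v T = inner ℝ (EuclideanSpace.single T (1:ℝ)) (annih j v) := by
    rw [EuclideanSpace.inner_single_left]; simp
  rw [h1, annih, LinearMap.adjoint_inner_right, create_single]
  by_cases hjT : j ∈ T
  · simp [hjT]
  · simp only [hjT, if_false, inner_smul_left, EuclideanSpace.inner_single_left]
    simp

/-- One creation (`true`) or annihilation (`false`) operator. -/
noncomputable def fop (p : Fin d × Bool) : Module.End ℝ (FermionFock d) :=
  if p.2 then create p.1 else annih p.1

/-- The operator associated to a word of creations/annihilations (head acts last). -/
noncomputable def wordOp (w : List (Fin d × Bool)) : Module.End ℝ (FermionFock d) :=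
  (w.map fop).prod

lemma wordOp_nil : wordOp ([] : List (Fin d × Bool)) = 1 := rfl

lemma wordOp_cons (p : Fin d × Bool) (w : List (Fin d × Bool)) :
    wordOp (p :: w) = fop p * wordOp w := by
  simp [wordOp]

lemma wordOp_append (w₁ w₂ : List (Fin d × Bool)) :
    wordOp (w₁ ++ w₂) = wordOp w₁ * wordOp w₂ := by
  simp [wordOp]

/-- `v` is supported on subsets not containing `m`. -/
def Off (m : Fin d) (v : FermionFock d) : Prop := ∀ T, m ∈ T → v T = 0

lemma off_create {j m : Fin d} (h : j ≠ m) {v : FermionFock d} (hv : Off m v) :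
    Off m (create j v) := by
  intro T hm
  rw [create_apply]
  by_cases hj : j ∈ T
  · simp only [hj, if_true]
    rw [hv _ (Finset.mem_erase.2 ⟨fun hh => h hh.symm, hm⟩), mul_zero]
  · simp [hj]

lemma off_annih {j m : Fin d} {v : FermionFock d} (hv : Off m v) :
    Off m (annih j v) := by
  intro T hm
  rw [annih_apply]
  by_cases hj : j ∈ T
  · simp [hj]
  · simp only [hj, if_false]
    rw [hv _ (Finset.mem_insert_of_mem hm), mul_zero]

lemma off_annih_self (m : Fin d) (v : FermionFock d) : Off m (annih m v) := by
  intro T hm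
  rw [annih_apply]
  simp [hm]

lemma annih_eq_zero {m : Fin d} {v : FermionFock d} (hv : Off m v) : annih m v = 0 := by
  ext T
  rw [annih_apply]
  by_cases hm : m ∈ T
  · simp [hm]
  · simp only [hm, if_false]
    rw [hv _ (Finset.mem_insert_self m T), mul_zero]
    rfl

lemma killed (m : Fin d) : ∀ w : List (Fin d × Bool), (m, true) ∉ w → (m, false) ∈ w →
    ∀ v : FermionFock d, Off m v → wordOp w v = 0 := by
  intro w
  induction w using List.reverseRecOn with
  | nil => intro _ h; simp at h
  | append_singleton l p ih =>
    intro hc ha v hv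
    rw [wordOp_append, Module.End.mul_apply]
    by_cases hp : p = (m, false)
    · have : fop p v = 0 := by
        rw [hp]; simpa [fop] using annih_eq_zero hv
      rw [show wordOp [p] v = fop p v by simp [wordOp, fop], this, map_zero]
    · have ha' : (m, false) ∈ l := by
        rcases List.mem_append.1 ha with h | h
        · exact h
        · exact absurd (List.mem_singleton.1 h).symm hp
      have hc' : (m, true) ∉ l := fun h => hc (List.mem_append.2 (Or.inl h))
      have hoff : Off m (wordOp [p] v) := by
        rw [show wordOp [p] v = fop p v by simp [wordOp, fop]]
        rcases p with ⟨j, b⟩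
        cases b with
        | true =>
          have hj : j ≠ m := by
            intro h; exact hc (List.mem_append.2 (Or.inr (by simp [h])))
          simpa [fop] using off_create hj hv
        | false => simpa [fop] using off_annih hv
      exact ih hc' ha' _ hoff

lemma offOut (m : Fin d) : ∀ w : List (Fin d × Bool), (m, true) ∉ w → (m, false) ∈ w →
    ∀ v : FermionFock d, Off m (wordOp w v) := by
  intro w
  induction w with
  | nil => intro _ h; simp at h
  | cons p l ih =>
    intro hc ha v
    rw [wordOp_cons, Module.End.mul_apply]
    by_cases hp : p = (m, false)
    · rw [hp]
      simpa [fop] using off_annih_self m (wordOp l v)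
    · have ha' : (m, false) ∈ l := by
        rcases List.mem_cons.1 ha with h | h
        · exact absurd h.symm hp
        · exact h
      have hc' : (m, true) ∉ l := fun h => hc (List.mem_cons_of_mem _ h)
      have hoff := ih hc' ha' v
      rcases p with ⟨j, b⟩
      cases b with
      | true =>
        have hj : j ≠ m := by
          intro h; exact hc (by simp [h])
        simpa [fop] using off_create hj hoff
      | false => simpa [fop] using off_annih hoff

lemma parity_lemma : ∀ (w : List (Fin d × Bool)) (S T : Finset (Fin d)),
    wordOp w (EuclideanSpace.single S 1) T ≠ 0 →
    ∀ i : Fin d, ((i ∈ T) ↔ (i ∈ S)) ↔ Even ((w.map Prod.fst).count i) := by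
  intro w
  induction w with
  | nil =>
    intro S T hne i
    have : T = S := by
      by_contra h
      apply hne
      simp [wordOp_nil, EuclideanSpace.single_apply, h]
    simp [this]
  | cons p l ih =>
    rcases p with ⟨j, b⟩
    intro S T hne i
    rw [wordOp_cons, Module.End.mul_apply] at hne
    cases b with
    | true =>
      simp only [fop, if_true] at hne
      rw [create_apply] at hne
      by_cases hj : j ∈ T
      · simp only [hj, if_true] at hne
        have hne' : wordOp l (EuclideanSpace.single S 1) (T.erase j) ≠ 0 := by
          intro h; apply hne; rw [h, mul_zero]
        have h1 := ih S (T.erase j) hne' i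
        rw [Finset.mem_erase] at h1
        by_cases hij : i = j
        · subst hij
          have hcnt : List.count i (List.map Prod.fst ((i, true) :: l))
              = List.count i (List.map Prod.fst l) + 1 := by simp
          rw [hcnt, Nat.even_add_one]
          simp only [hj, ne_eq, not_true_eq_false, false_and, false_iff,
            iff_true] at h1 ⊢
          tauto
        · have hji : j ≠ i := fun h => hij h.symm
          have hcnt : List.count i (List.map Prod.fst ((j, true) :: l))
              = List.count i (List.map Prod.fst l) := by simp [List.count_cons, hji]
          rw [hcnt]
          simpa [hij] using h1
      · simp [hj] at hne
    | false =>
      simp only [fop, Bool.false_eq_true, if_false] at hne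
      rw [annih_apply] at hne
      by_cases hj : j ∈ T
      · simp [hj] at hne
      · simp only [hj, if_false] at hne
        have hne' : wordOp l (EuclideanSpace.single S 1) (insert j T) ≠ 0 := by
          intro h; apply hne; rw [h, mul_zero]
        have h1 := ih S (insert j T) hne' i
        rw [Finset.mem_insert] at h1
        by_cases hij : i = j
        · subst hij
          have hcnt : List.count i (List.map Prod.fst ((i, false) :: l))
              = List.count i (List.map Prod.fst l) + 1 := by simp
          rw [hcnt, Nat.even_add_one]
          simp only [hj, true_or, true_iff, iff_false, iff_true] at h1 ⊢
          tauto
        · have hji : j ≠ i := fun h => hij h.symm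
          have hcnt : List.count i (List.map Prod.fst ((j, false) :: l))
              = List.count i (List.map Prod.fst l) := by simp [List.count_cons, hji]
          rw [hcnt]
          simpa [hij] using h1

lemma erase_insert_comm' {m j : Fin d} (h : m ≠ j) (T : Finset (Fin d)) :
    (insert m T).erase j = insert m (T.erase j) := by
  ext x
  simp only [Finset.mem_erase, Finset.mem_insert]
  constructor
  · rintro ⟨hx, hx2 | hx3⟩
    · exact Or.inl hx2
    · exact Or.inr ⟨hx, hx3⟩
  · rintro (rfl | ⟨hx, hx2⟩)
    · exact ⟨h, Or.inl rfl⟩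
    · exact ⟨hx, Or.inr hx2⟩

lemma filter_card_insert {m j : Fin d} {T : Finset (Fin d)} (hm : m ∉ T) :
    ((insert m T).filter fun x => x < j).card
      = (T.filter fun x => x < j).card + (if m < j then 1 else 0) := by
  rw [Finset.filter_insert]
  by_cases h : m < j
  · rw [if_pos h, if_pos h, Finset.card_insert_of_notMem (fun hh => hm (Finset.mem_filter.1 hh).1)]
  · rw [if_neg h, if_neg h, add_zero]

lemma untouched_sign (m : Fin d) : ∀ (w : List (Fin d × Bool)), (∀ p ∈ w, p.1 ≠ m) →
    ∀ S T : Finset (Fin d), m ∉ S → m ∉ T →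
    wordOp w (EuclideanSpace.single (insert m S) 1) (insert m T)
      = (-1 : ℝ) ^ ((w.filter fun p => m < p.1).length)
        * wordOp w (EuclideanSpace.single S 1) T := by
  intro w
  induction w with
  | nil =>
    intro _ S T hS hT
    simp only [wordOp_nil, Module.End.one_apply, EuclideanSpace.single_apply,
      List.filter_nil, List.length_nil, pow_zero, one_mul]
    by_cases h : T = S
    · simp [h]
    · have h2 : insert m T ≠ insert m S := by
        intro hh
        apply h
        ext x
        by_cases hx : x = m
        · simp [hx, hS, hT]
        · constructor
          · intro hxT
            have := hh ▸ (Finset.mem_insert_of_mem hxT)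
            rcases Finset.mem_insert.1 this with h3 | h3
            · exact absurd h3 hx
            · exact h3
          · intro hxS
            have : x ∈ insert m T := hh ▸ (Finset.mem_insert_of_mem hxS)
            rcases Finset.mem_insert.1 this with h3 | h3
            · exact absurd h3 hx
            · exact h3
      simp [h, h2]
  | cons p l ih =>
    rcases p with ⟨j, b⟩
    intro hno S T hS hT
    have hjm : j ≠ m := hno (j, b) List.mem_cons_self
    have hmj : m ≠ j := fun h => hjm h.symm
    have hno' : ∀ p ∈ l, p.1 ≠ m := fun p hp => hno p (List.mem_cons_of_mem _ hp)
    have hflt : ((((j, b) :: l).filter fun p => m < p.1).length)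
        = ((l.filter fun p => m < p.1).length) + (if m < j then 1 else 0) := by
      rw [List.filter_cons]
      by_cases h : m < j
      · simp [h]
      · simp [h]
    rw [wordOp_cons, Module.End.mul_apply, Module.End.mul_apply, hflt]
    cases b with
    | true =>
      simp only [fop, if_true]
      rw [create_apply, create_apply]
      by_cases hj : j ∈ T
      · have hj' : j ∈ insert m T := Finset.mem_insert_of_mem hj
        rw [if_pos hj, if_pos hj', erase_insert_comm' hmj,
          filter_card_insert hT,
          ih hno' S (T.erase j) hS (fun hh => hT (Finset.mem_of_mem_erase hh))]
        rw [pow_add, pow_add]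
        ring
      · have hj' : j ∉ insert m T := by
          rw [Finset.mem_insert]; push_neg; exact ⟨hjm, hj⟩
        rw [if_neg hj, if_neg hj', mul_zero]
    | false =>
      simp only [fop, Bool.false_eq_true, if_false]
      rw [annih_apply, annih_apply]
      by_cases hj : j ∈ T
      · have hj' : j ∈ insert m T := Finset.mem_insert_of_mem hj
        rw [if_pos hj, if_pos hj', mul_zero]
      · have hj' : j ∉ insert m T := by
          rw [Finset.mem_insert]; push_neg; exact ⟨hjm, hj⟩
        rw [if_neg hj, if_neg hj']
        have hins : insert j (insert m T) = insert m (insert j T) := Finset.insert_comm j m T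
        rw [hins, filter_card_insert hT,
          ih hno' S (insert j T) hS (by rw [Finset.mem_insert]; push_neg; exact ⟨hmj, hT⟩)]
        rw [pow_add, pow_add]
        ring


/-- The supertrace on `End(∧V*)`: the trace on even forms minus the trace on odd forms,
computed in the orthonormal basis `(e_S)` of `∧V*`. -/
noncomputable def Str (A : Module.End ℝ (FermionFock d)) : ℝ :=
  ∑ S : Finset (Fin d), (-1 : ℝ) ^ S.card * A (EuclideanSpace.single S 1) S

lemma filter_length_eq_sum (m : Fin d) (w : List (Fin d × Bool)) :
    (w.filter fun p => m < p.1).length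
      = ∑ i : Fin d, (if m < i then (w.map Prod.fst).count i else 0) := by
  induction w with
  | nil => simp
  | cons p l ih =>
    rcases p with ⟨j, b⟩
    rw [List.filter_cons]
    have hcnt : ∀ i : Fin d, ((((j, b) :: l).map Prod.fst).count i)
        = ((l.map Prod.fst).count i) + (if j = i then 1 else 0) := by
      intro i
      simp [List.count_cons]
    have hsum : ∑ i : Fin d, (if m < i then (((j, b) :: l).map Prod.fst).count i else 0)
        = (∑ i : Fin d, (if m < i then (l.map Prod.fst).count i else 0))
          + (if m < j then 1 else 0) := by
      simp only [hcnt]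
      have hsplit : ∀ x : Fin d,
          (if m < x then (l.map Prod.fst).count x + (if j = x then 1 else 0) else 0)
          = (if m < x then (l.map Prod.fst).count x else 0)
            + (if x = j then (if m < j then 1 else 0) else 0) := by
        intro x
        by_cases h : m < x
        · by_cases h2 : x = j
          · subst h2; simp [h]
          · have : ¬ j = x := fun hh => h2 hh.symm
            simp [h, h2, this]
        · by_cases h2 : x = j
          · subst h2; simp [h]
          · simp [h, h2]
      rw [Finset.sum_congr rfl (fun x _ => hsplit x), Finset.sum_add_distrib]
      congr 1
      rw [Finset.sum_ite_eq' Finset.univ j fun _ => (if m < j then 1 else 0)]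
      simp
    rw [hsum, ← ih]
    by_cases h : m < j <;> simp [h]

lemma str_wordOp (w : List (Fin d × Bool))
    (hw : ((w.filter fun p => p.2).length) < d) : Str (wordOp w) = 0 := by
  classical
  -- find a mode `m` that is never created
  obtain ⟨m, hm⟩ : ∃ m : Fin d, (m, true) ∉ w := by
    by_contra h
    push_neg at h
    have hsub : (Finset.univ : Finset (Fin d)) ⊆
        ((w.filter fun p => p.2).map Prod.fst).toFinset := by
      intro m _
      rw [List.mem_toFinset]
      exact List.mem_map.2 ⟨(m, true), List.mem_filter.2 ⟨h m, rfl⟩, rfl⟩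
    have h1 := Finset.card_le_card hsub
    rw [Finset.card_univ, Fintype.card_fin] at h1
    have h2 := ((w.filter fun p => p.2).map Prod.fst).toFinset_card_le
    rw [List.length_map] at h2
    omega
  by_cases hann : (m, false) ∈ w
  · -- the mode is annihilated but never created: all diagonal entries vanish
    apply Finset.sum_eq_zero
    intro S _
    by_cases hmS : m ∈ S
    · rw [offOut m w hm hann _ S hmS, mul_zero]
    · have h0 : Off m (EuclideanSpace.single S (1:ℝ)) := by
        intro T hT
        rw [EuclideanSpace.single_apply]
        by_cases h : T = S
        · exact absurd (h ▸ hT) hmS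
        · simp [h]
      rw [killed m w hm hann _ h0]
      simp
  · -- the mode is untouched
    have hno : ∀ p ∈ w, p.1 ≠ m := by
      rintro ⟨j, b⟩ hp rfl
      cases b
      · exact hann hp
      · exact hm hp
    by_cases hodd : ∀ i : Fin d, Even ((w.map Prod.fst).count i)
    · -- all modes are toggled evenly: pairing S ↔ S ∆ {m}
      have hevenf : Even ((w.filter fun p => m < p.1).length) := by
        rw [filter_length_eq_sum]
        refine Finset.even_sum _ (fun i _ => ?_)
        by_cases h : m < i <;> simp [h, hodd i]
      have hkey : ∀ S : Finset (Fin d), m ∉ S →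
          ((-1 : ℝ) ^ S.card * wordOp w (EuclideanSpace.single S 1) S)
          + ((-1 : ℝ) ^ (insert m S).card
              * wordOp w (EuclideanSpace.single (insert m S) 1) (insert m S)) = 0 := by
        intro S hS
        rw [untouched_sign m w hno S S hS hS, Even.neg_one_pow hevenf, one_mul,
          Finset.card_insert_of_notMem hS, pow_succ]
        ring
      apply Finset.sum_ninvolution (fun S => if m ∈ S then S.erase m else insert m S)
      · intro S
        by_cases hmS : m ∈ S
        · rw [if_pos hmS]
          have h1 := hkey (S.erase m) (Finset.notMem_erase m S)
          rw [Finset.insert_erase hmS] at h1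
          rw [add_comm]
          exact h1
        · rw [if_neg hmS]
          exact hkey S hmS
      · intro S _
        by_cases hmS : m ∈ S
        · rw [if_pos hmS]
          intro h
          apply Finset.notMem_erase m S
          rw [h]
          exact hmS
        · rw [if_neg hmS]
          intro h
          apply hmS
          rw [← h]
          exact Finset.mem_insert_self m S
      · intro S; exact Finset.mem_univ _
      · intro S
        by_cases hmS : m ∈ S
        · rw [if_pos hmS, if_neg (Finset.notMem_erase m S), Finset.insert_erase hmS]
        · rw [if_neg hmS, if_pos (Finset.mem_insert_self m S), Finset.erase_insert hmS]
    · -- some mode toggled oddly: all diagonal entries vanish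
      push_neg at hodd
      obtain ⟨i, hi⟩ := hodd
      apply Finset.sum_eq_zero
      intro S _
      by_cases h : wordOp w (EuclideanSpace.single S 1) S = 0
      · rw [h, mul_zero]
      · exact absurd ((parity_lemma w S S h i).1 Iff.rfl) hi

/-- Words with at most `n` creation operators. -/
def WSet (n : ℕ) : Set (Module.End ℝ (FermionFock d)) :=
  {B | ∃ w : List (Fin d × Bool), ((w.filter fun p => p.2).length) ≤ n ∧ B = wordOp w}

lemma wset_mono {a b : ℕ} (h : a ≤ b) : (WSet a : Set (Module.End ℝ (FermionFock d))) ⊆ WSet b :=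
  fun _ ⟨w, hw, he⟩ => ⟨w, hw.trans h, he⟩

set_option maxHeartbeats 1000000 in
lemma pow_mem_span_wset (A : Module.End ℝ (FermionFock d))
    (hA : A ∈ Submodule.span ℝ (WSet 2)) (k : ℕ) :
    A ^ k ∈ Submodule.span ℝ (WSet (2 * k)) := by
  induction k with
  | zero =>
    rw [pow_zero]
    apply Submodule.subset_span
    exact ⟨[], by simp, by simp [wordOp_nil]⟩
  | succ k ih =>
    rw [pow_succ]
    have h1 : A ^ k * A ∈ Submodule.span ℝ (WSet (2 * k)) * Submodule.span ℝ (WSet 2) :=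
      Submodule.mul_mem_mul ih hA
    rw [Submodule.span_mul_span] at h1
    refine Submodule.span_le.2 ?_ h1
    intro B hB
    rw [Set.mem_mul] at hB
    obtain ⟨x, hx, y, hy, rfl⟩ := hB
    obtain ⟨w₁, hw₁, rfl⟩ := hx
    obtain ⟨w₂, hw₂, rfl⟩ := hy
    apply Submodule.subset_span
    refine ⟨w₁ ++ w₂, ?_, (wordOp_append w₁ w₂).symm⟩
    rw [List.filter_append, List.length_append]
    omega

lemma str_add (A B : Module.End ℝ (FermionFock d)) : Str (A + B) = Str A + Str B := by
  rw [Str, Str, Str, ← Finset.sum_add_distrib]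
  apply Finset.sum_congr rfl
  intro S _
  rw [LinearMap.add_apply]
  simp [mul_add]

lemma str_smul (c : ℝ) (A : Module.End ℝ (FermionFock d)) : Str (c • A) = c * Str A := by
  rw [Str, Str, Finset.mul_sum]
  apply Finset.sum_congr rfl
  intro S _
  rw [LinearMap.smul_apply]
  simp
  ring


/-- **Vanishing of low-order supertraces.** If `A ∈ End(∧V*)` is a linear combination of
operators of the forms `a*ᵢ aⱼ` and `a*ᵢ aⱼ a*ₖ aₗ`, and `k ≤ d/2 - 1`, then
`Str(A^k) = 0`. -/
theorem supertrace_low_power_vanishes (d : ℕ) (A : Module.End ℝ (FermionFock d))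
    (hA : A ∈ Submodule.span ℝ
      ({T | ∃ i j, T = create i * annih j} ∪
        {T | ∃ i j k l, T = create i * annih j * (create k * annih l)}))
    (k : ℕ) (hk : (k : ℝ) ≤ (d : ℝ) / 2 - 1) :
    Str (A ^ k) = 0 := by
  have hd : 2 * k + 2 ≤ d := by
    have h1 : (2 * k + 2 : ℝ) ≤ (d : ℝ) := by push_cast; linarith
    exact_mod_cast h1
  have hA2 : A ∈ Submodule.span ℝ (WSet 2 : Set (Module.End ℝ (FermionFock d))) := by
    refine Submodule.span_mono ?_ hA
    rintro B (⟨i, j, rfl⟩ | ⟨i, j, a, b, rfl⟩)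
    · exact ⟨[(i, true), (j, false)], by simp, by simp [wordOp, fop]⟩
    · exact ⟨[(i, true), (j, false), (a, true), (b, false)], by simp,
        by simp [wordOp, fop, mul_assoc]⟩
  have hmem := pow_mem_span_wset A hA2 k
  refine Submodule.span_induction (p := fun B _ => Str B = 0) ?_ ?_ ?_ ?_ hmem
  · rintro B ⟨w, hw, rfl⟩
    exact str_wordOp w (by omega)
  · simp [Str]
  · intro x y _ _ hx hy
    rw [str_add, hx, hy, add_zero]
  · intro c x _ hx
    rw [str_smul, hx, mul_zero]
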